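/- Two diagrams τ, ρ in the partition monoid Pₙ are left equivalent (their restrictions to n̄ coincide and they have the same right parts) if and only if the left ideals they generate in the partition algebra 𝐏ₙ(δ) coincide: 𝐏ₙ τ = 𝐏ₙ ρ (for δ ≠ 0). -/
import Mathlib


open scoped Classical
open Relation
noncomputable section

/-- Vertices of a diagram: `inl` = unprimed points `n̄`, `inr` = primed points `n̄'`. -/
abbrev DVert (n : ℕ) := Fin n ⊕ Fin n

/-- Tripled vertex set used for gluing: bottom (unprimed of the right factor),
middle (identified vertices), top (primed of the left factor). -/
abbrev TVert (n : ℕ) := Fin n ⊕ (Fin n ⊕ Fin n)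

def embBot (n : ℕ) : DVert n → TVert n := Sum.elim Sum.inl (fun i => Sum.inr (Sum.inl i))
def embTop (n : ℕ) : DVert n → TVert n :=
  Sum.elim (fun i => Sum.inr (Sum.inl i)) (fun i => Sum.inr (Sum.inr i))
def embOut (n : ℕ) : DVert n → TVert n := Sum.elim Sum.inl (fun i => Sum.inr (Sum.inr i))

/-- The minimal equivalence relation `χ` on the tripled vertex set containing
(the embedded copies of) `τ` and `ρ`. -/
def glue (n : ℕ) (τ ρ : Setoid (DVert n)) : Setoid (TVert n) :=
  EqvGen.setoid (fun x y =>
    (∃ a b, ρ.r a b ∧ x = embBot n a ∧ y = embBot n b) ∨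
    (∃ a b, τ.r a b ∧ x = embTop n a ∧ y = embTop n b))

/-- Composition `τ ∘ ρ` in the partition monoid: glue and restrict to the outer vertices. -/
def pcomp (n : ℕ) (τ ρ : Setoid (DVert n)) : Setoid (DVert n) where
  r x y := (glue n τ ρ).r (embOut n x) (embOut n y)
  iseqv := ⟨fun _ => (glue n τ ρ).iseqv.refl _, fun h => (glue n τ ρ).iseqv.symm h,
    fun h₁ h₂ => (glue n τ ρ).iseqv.trans h₁ h₂⟩

/-- A middle vertex of the tripled vertex set. -/
def isMiddle {n : ℕ} (x : TVert n) : Prop := ∃ i, x = Sum.inr (Sum.inl i)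

/-- `c(τ,ρ)`: the number of classes of the glued relation contained in the middle row. -/
def ccount (n : ℕ) (τ ρ : Setoid (DVert n)) : ℕ :=
  {C ∈ (glue n τ ρ).classes | ∀ x ∈ C, isMiddle x}.ncard

/-- A propagating part: one meeting both the unprimed and the primed vertices. -/
def IsPropagating {n : ℕ} (C : Set (DVert n)) : Prop :=
  (∃ i, Sum.inl i ∈ C) ∧ (∃ i, Sum.inr i ∈ C)

/-- The rank `r(σ)`: the number of propagating parts of `σ`. -/
def prank (n : ℕ) (σ : Setoid (DVert n)) : ℕ :=
  {C ∈ σ.classes | IsPropagating C}.ncard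

/-- The anti-involution `⋆` swapping primed and unprimed vertices. -/
def pstar (n : ℕ) (σ : Setoid (DVert n)) : Setoid (DVert n) where
  r x y := σ.r x.swap y.swap
  iseqv := ⟨fun _ => σ.iseqv.refl _, fun h => σ.iseqv.symm h,
    fun h₁ h₂ => σ.iseqv.trans h₁ h₂⟩

/-- Minimal unprimed vertex of a part. -/
def minL {n : ℕ} (C : Set (DVert n)) : ℕ :=
  sInf {m : ℕ | ∃ j : Fin n, (j : ℕ) = m ∧ Sum.inl j ∈ C}

/-- Minimal primed vertex of a part. -/
def minR {n : ℕ} (C : Set (DVert n)) : ℕ :=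
  sInf {m : ℕ | ∃ j : Fin n, (j : ℕ) = m ∧ Sum.inr j ∈ C}

/-- Position of a propagating part `C` of `σ` in the ordering (by minimal elements) of the
intersections of the propagating parts with the unprimed vertices. -/
def posL (n : ℕ) (σ : Setoid (DVert n)) (C : Set (DVert n)) : ℕ :=
  {D ∈ σ.classes | IsPropagating D ∧ minL D < minL C}.ncard

/-- Position of a propagating part `C` of `σ` in the ordering (by minimal elements) of the
intersections of the propagating parts with the primed vertices. -/
def posR (n : ℕ) (σ : Setoid (DVert n)) (C : Set (DVert n)) : ℕ :=
  {D ∈ σ.classes | IsPropagating D ∧ minR D < minR C}.ncard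

/-- The permutation `π_σ ∈ S_k` recording how propagating lines connect the two sides of `σ`
(for a diagram of rank `k`): the unique permutation sending the position of a propagating part
on the unprimed side to its position on the primed side. -/
def permAt (n k : ℕ) (σ : Setoid (DVert n)) : Equiv.Perm (Fin k) :=
  Classical.epsilon (fun π : Equiv.Perm (Fin k) =>
    ∀ C ∈ σ.classes, IsPropagating C → ∀ h : posL n σ C < k,
      ((π ⟨posL n σ C, h⟩ : Fin k) : ℕ) = posR n σ C)

/-- The product of the partition algebra `𝐏ₙ(δ)` on the free vector space on diagrams. -/
def pmul (n : ℕ) (δ : ℂ) (f g : Setoid (DVert n) →₀ ℂ) : Setoid (DVert n) →₀ ℂ :=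
  f.sum fun τ a => g.sum fun ρ b =>
    Finsupp.single (pcomp n τ ρ) (δ ^ ccount n τ ρ * (a * b))

/-- `i(π,s)`: the number of pairs `i < j` with `s i = j` and `π i > π j`. -/
def icount (n : ℕ) (π s : Equiv.Perm (Fin n)) : ℕ :=
  (Finset.univ.filter fun p : Fin n × Fin n => p.1 < p.2 ∧ s p.1 = p.2 ∧ π p.2 < π p.1).card



section LIhelpers
variable {n : ℕ}

theorem eqvGen_map_imp {α β : Type*} {gen : α → α → Prop} {R : β → β → Prop}
    (hR : Equivalence R) (f : α → β) (h : ∀ x y, gen x y → R (f x) (f y)) :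
    ∀ {x y}, EqvGen gen x y → R (f x) (f y) := by
  intro x y hxy
  induction hxy with
  | rel a b hab => exact h a b hab
  | refl a => exact hR.refl _
  | symm a b _ ih => exact hR.symm ih
  | trans a b c _ _ ih1 ih2 => exact hR.trans ih1 ih2

def cls {α : Type*} (σ : Setoid α) (a : α) : Set α := {d | σ.r d a}

theorem cls_eq_iff {α : Type*} {σ : Setoid α} {a b : α} : cls σ a = cls σ b ↔ σ.r a b := by
  constructor
  · intro h
    have ha : a ∈ cls σ a := σ.iseqv.refl a
    rw [h] at ha; exact ha
  · intro h; ext d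
    exact ⟨fun hd => σ.iseqv.trans hd h, fun hd => σ.iseqv.trans hd (σ.iseqv.symm h)⟩

theorem cls_eq_of_r {α : Type*} {σ : Setoid α} {a b : α} (h : σ.r a b) : cls σ a = cls σ b :=
  cls_eq_iff.mpr h

@[simp] theorem embBot_inl (i : Fin n) : embBot n (Sum.inl i) = Sum.inl i := rfl
@[simp] theorem embBot_inr (i : Fin n) : embBot n (Sum.inr i) = Sum.inr (Sum.inl i) := rfl
@[simp] theorem embTop_inl (i : Fin n) : embTop n (Sum.inl i) = Sum.inr (Sum.inl i) := rfl
@[simp] theorem embTop_inr (i : Fin n) : embTop n (Sum.inr i) = Sum.inr (Sum.inr i) := rfl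
@[simp] theorem embOut_inl (i : Fin n) : embOut n (Sum.inl i) = Sum.inl i := rfl
@[simp] theorem embOut_inr (i : Fin n) : embOut n (Sum.inr i) = Sum.inr (Sum.inr i) := rfl

theorem glue_bot {τ ρ : Setoid (DVert n)} {a b : DVert n} (h : ρ.r a b) :
    (glue n τ ρ).r (embBot n a) (embBot n b) := EqvGen.rel _ _ (Or.inl ⟨a, b, h, rfl, rfl⟩)

theorem glue_top {τ ρ : Setoid (DVert n)} {a b : DVert n} (h : τ.r a b) :
    (glue n τ ρ).r (embTop n a) (embTop n b) := EqvGen.rel _ _ (Or.inr ⟨a, b, h, rfl, rfl⟩)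

theorem pcomp_r {τ ρ : Setoid (DVert n)} {x y : DVert n} :
    (pcomp n τ ρ).r x y ↔ (glue n τ ρ).r (embOut n x) (embOut n y) := Iff.rfl

/-- Eliminate a glue relation by mapping into an equivalence. -/
theorem glue_map {τ ρ : Setoid (DVert n)} {β : Type*} {R : β → β → Prop}
    (hR : Equivalence R) (f : TVert n → β)
    (hbot : ∀ a b, ρ.r a b → R (f (embBot n a)) (f (embBot n b)))
    (htop : ∀ a b, τ.r a b → R (f (embTop n a)) (f (embTop n b)))
    {x y} (h : (glue n τ ρ).r x y) : R (f x) (f y) := by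
  refine eqvGen_map_imp hR f ?_ h
  rintro u v (⟨a, b, hab, rfl, rfl⟩ | ⟨a, b, hab, rfl, rfl⟩)
  exacts [hbot a b hab, htop a b hab]

theorem glue_ind {τ ρ : Setoid (DVert n)} {β : Type*} (q : TVert n → β)
    (hbot : ∀ a b, ρ.r a b → q (embBot n a) = q (embBot n b))
    (htop : ∀ a b, τ.r a b → q (embTop n a) = q (embTop n b))
    {x y} (h : (glue n τ ρ).r x y) : q x = q y :=
  glue_map ⟨fun _ => rfl, Eq.symm, Eq.trans⟩ q hbot htop h

end LIhelpers

section LIpart2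
variable {n : ℕ}

/-- The identity diagram. -/
def pid (n : ℕ) : Setoid (DVert n) := Setoid.ker (Sum.elim id id)

theorem pid_r {x y : DVert n} :
    (pid n).r x y ↔ Sum.elim id id x = Sum.elim id id y := Iff.rfl

def qid (ρ : Setoid (DVert n)) : TVert n → Set (DVert n)
  | Sum.inl i => cls ρ (Sum.inl i)
  | Sum.inr (Sum.inl i) => cls ρ (Sum.inr i)
  | Sum.inr (Sum.inr i) => cls ρ (Sum.inr i)

theorem pcomp_pid (ρ : Setoid (DVert n)) : pcomp n (pid n) ρ = ρ := by
  apply Setoid.ext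
  intro x y
  rw [pcomp_r]
  constructor
  · intro h
    have key : qid ρ (embOut n x) = qid ρ (embOut n y) := by
      refine glue_ind (qid ρ) ?_ ?_ h
      · rintro (a | a) (b | b) hab <;> exact cls_eq_of_r hab
      · rintro (a | a) (b | b) hab <;>
          simp only [pid_r, Sum.elim_inl, Sum.elim_inr, id] at hab <;>
          simp [embTop_inl, embTop_inr, qid, hab]
    have : ∀ z : DVert n, qid ρ (embOut n z) = cls ρ z := by rintro (i | i) <;> rfl
    rw [this x, this y] at key
    exact cls_eq_iff.mp key
  · intro h
    have conn : ∀ z : DVert n, (glue n (pid n) ρ).r (embBot n z) (embOut n z) := by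
      rintro (i | i)
      · exact (glue n (pid n) ρ).iseqv.refl _
      · have : (pid n).r (Sum.inl i) (Sum.inr i) := rfl
        exact glue_top this
    exact (glue n (pid n) ρ).iseqv.trans ((glue n (pid n) ρ).iseqv.symm (conn x))
      ((glue n (pid n) ρ).iseqv.trans (glue_bot h) (conn y))

theorem pcomp_restrict {σ τ : Setoid (DVert n)} {i j : Fin n}
    (h : τ.r (Sum.inl i) (Sum.inl j)) : (pcomp n σ τ).r (Sum.inl i) (Sum.inl j) :=
  glue_bot (τ := σ) h

/-- If the `τ`-class of `inl i` lies in the unprimed row, it is unchanged by composition. -/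
theorem pcomp_class_inl {σ τ : Setoid (DVert n)} {i : Fin n}
    (hall : ∀ d, τ.r d (Sum.inl i) → ∃ k, d = Sum.inl k) (d : DVert n) :
    (pcomp n σ τ).r d (Sum.inl i) ↔ τ.r d (Sum.inl i) := by
  set qb : TVert n → Prop := fun u => ∃ j, u = Sum.inl j ∧ τ.r (Sum.inl j) (Sum.inl i) with hqb
  have step : ∀ a b, τ.r a b → qb (embBot n a) → qb (embBot n b) := by
    intro a b hab ⟨j, hj, hji⟩
    have ha : a = Sum.inl j := by
      cases a with
      | inl k => simpa using hj
      | inr k => simp at hj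
    have hb : τ.r b (Sum.inl i) :=
      τ.iseqv.trans (τ.iseqv.symm (ha ▸ hab)) hji
    obtain ⟨k, rfl⟩ := hall b hb
    exact ⟨k, rfl, hb⟩
  constructor
  · intro h
    have key : qb (embOut n d) ↔ qb (embOut n (Sum.inl i)) := by
      refine glue_map ⟨Iff.refl, Iff.symm, Iff.trans⟩ qb ?_ ?_ h
      · intro a b hab
        exact ⟨step a b hab, step b a (τ.iseqv.symm hab)⟩
      · intro a b _
        constructor <;> · rintro ⟨j, hj, -⟩; cases a <;> cases b <;> simp_all
    have : qb (embOut n d) := key.mpr ⟨i, rfl, τ.iseqv.refl _⟩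
    obtain ⟨j, hj, hji⟩ := this
    have hd : d = Sum.inl j := by
      cases d with
      | inl k => simpa using hj
      | inr k => simp at hj
    rw [hd]; exact hji
  · intro h
    obtain ⟨k, rfl⟩ := hall d h
    exact pcomp_restrict h

/-- Right parts survive composition. -/
theorem pcomp_right_part {σ τ : Setoid (DVert n)} {C : Set (DVert n)}
    (hC : C ∈ τ.classes) (hsub : C ⊆ Set.range Sum.inl) : C ∈ (pcomp n σ τ).classes := by
  obtain ⟨y, rfl⟩ := hC
  have hy : y ∈ {x | τ.r x y} := τ.iseqv.refl y
  obtain ⟨i, hi⟩ := hsub hy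
  subst hi
  have hall : ∀ d, τ.r d (Sum.inl i) → ∃ k, d = Sum.inl k := by
    intro d hd
    obtain ⟨k, hk⟩ := hsub hd
    exact ⟨k, hk.symm⟩
  refine ⟨Sum.inl i, ?_⟩
  ext d
  exact (pcomp_class_inl (σ := σ) hall d).symm

/-- Transfer of non-right (propagating at `inl i`) classes using equality of right parts. -/
theorem prop_transfer {τ ρ : Setoid (DVert n)}
    (hcls : {C | C ∈ τ.classes ∧ C ⊆ Set.range Sum.inl} ⊆
      {C | C ∈ ρ.classes ∧ C ⊆ Set.range Sum.inl})
    {i : Fin n} (h : ∃ k, ρ.r (Sum.inl i) (Sum.inr k)) :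
    ∃ k, τ.r (Sum.inl i) (Sum.inr k) := by
  by_contra hno
  push_neg at hno
  have hsub : cls τ (Sum.inl i) ⊆ Set.range Sum.inl := by
    rintro (k | k) hd
    · exact ⟨k, rfl⟩
    · exact absurd (τ.iseqv.symm hd) (hno k)
  have hmem : cls τ (Sum.inl i) ∈ τ.classes := ⟨Sum.inl i, rfl⟩
  obtain ⟨⟨y, hy⟩, hsub'⟩ := hcls ⟨hmem, hsub⟩
  obtain ⟨k, hk⟩ := h
  have hiy : ρ.r (Sum.inl i) y := by
    have : Sum.inl i ∈ cls τ (Sum.inl i) := τ.iseqv.refl _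
    rw [hy] at this; exact this
  have : Sum.inr k ∈ cls τ (Sum.inl i) := by
    rw [hy]; exact ρ.iseqv.trans (ρ.iseqv.symm hk) hiy
  obtain ⟨m, hm⟩ := hsub' this
  simp at hm

end LIpart2

section LIpart3
variable {n : ℕ}

def legen (τ ρ : Setoid (DVert n)) : DVert n → DVert n → Prop := fun x y =>
  (∃ i j, τ.r (Sum.inr i) (Sum.inr j) ∧ x = Sum.inl i ∧ y = Sum.inl j) ∨
  (∃ i j, ρ.r (Sum.inr i) (Sum.inr j) ∧ x = Sum.inr i ∧ y = Sum.inr j) ∨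
  (∃ i j k, τ.r (Sum.inr i) (Sum.inl k) ∧ ρ.r (Sum.inl k) (Sum.inr j) ∧
    x = Sum.inl i ∧ y = Sum.inr j)

/-- The witness diagram `σ = ρ ∘ τ⋆` used in the forward direction. -/
def sigLE (n : ℕ) (τ ρ : Setoid (DVert n)) : Setoid (DVert n) := EqvGen.setoid (legen τ ρ)

def qLE (τ ρ : Setoid (DVert n)) : TVert n → Set (DVert n) ⊕ Set (DVert n)
  | Sum.inl i => Sum.inl (cls ρ (Sum.inl i))
  | Sum.inr (Sum.inr i) => Sum.inl (cls ρ (Sum.inr i))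
  | Sum.inr (Sum.inl i) =>
      if h : ∃ k, τ.r (Sum.inr i) (Sum.inl k) then Sum.inl (cls ρ (Sum.inl h.choose))
      else Sum.inr (cls τ (Sum.inr i))

variable {τ ρ : Setoid (DVert n)}

theorem qLE_mid (hres : ∀ i j, τ.r (Sum.inl i) (Sum.inl j) → ρ.r (Sum.inl i) (Sum.inl j))
    {i k : Fin n} (h : τ.r (Sum.inr i) (Sum.inl k)) :
    qLE τ ρ (Sum.inr (Sum.inl i)) = Sum.inl (cls ρ (Sum.inl k)) := by
  have hx : ∃ k, τ.r (Sum.inr i) (Sum.inl k) := ⟨k, h⟩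
  show (if h : ∃ k, τ.r (Sum.inr i) (Sum.inl k) then
      Sum.inl (cls ρ (Sum.inl h.choose)) else Sum.inr (cls τ (Sum.inr i))) = _
  rw [dif_pos hx]
  congr 1
  exact cls_eq_of_r (hres _ _ (τ.iseqv.trans (τ.iseqv.symm hx.choose_spec) h))

theorem qLE_mid_none {i : Fin n} (h : ¬ ∃ k, τ.r (Sum.inr i) (Sum.inl k)) :
    qLE τ ρ (Sum.inr (Sum.inl i)) = Sum.inr (cls τ (Sum.inr i)) := by
  show (if h : ∃ k, τ.r (Sum.inr i) (Sum.inl k) then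
      Sum.inl (cls ρ (Sum.inl h.choose)) else Sum.inr (cls τ (Sum.inr i))) = _
  rw [dif_neg h]

@[simp] theorem qLE_inl {i : Fin n} : qLE τ ρ (Sum.inl i) = Sum.inl (cls ρ (Sum.inl i)) := rfl
@[simp] theorem qLE_inr_inr {i : Fin n} :
    qLE τ ρ (Sum.inr (Sum.inr i)) = Sum.inl (cls ρ (Sum.inr i)) := rfl

theorem qLE_mid_congr (hres : ∀ i j, τ.r (Sum.inl i) (Sum.inl j) → ρ.r (Sum.inl i) (Sum.inl j))
    {i j : Fin n} (h : τ.r (Sum.inr i) (Sum.inr j)) :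
    qLE τ ρ (Sum.inr (Sum.inl i)) = qLE τ ρ (Sum.inr (Sum.inl j)) := by
  by_cases hi : ∃ k, τ.r (Sum.inr i) (Sum.inl k)
  · obtain ⟨k, hk⟩ := hi
    rw [qLE_mid hres hk, qLE_mid hres (τ.iseqv.trans (τ.iseqv.symm h) hk)]
  · have hj : ¬ ∃ k, τ.r (Sum.inr j) (Sum.inl k) := by
      rintro ⟨k, hk⟩; exact hi ⟨k, τ.iseqv.trans h hk⟩
    rw [qLE_mid_none hi, qLE_mid_none hj]
    exact congrArg Sum.inr (cls_eq_of_r h)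

theorem qLE_bot (hres : ∀ i j, τ.r (Sum.inl i) (Sum.inl j) → ρ.r (Sum.inl i) (Sum.inl j)) :
    ∀ a b, τ.r a b → qLE τ ρ (embBot n a) = qLE τ ρ (embBot n b) := by
  rintro (i | i) (j | j) hab
  · show qLE τ ρ (Sum.inl i) = qLE τ ρ (Sum.inl j)
    rw [qLE_inl, qLE_inl]
    exact congrArg Sum.inl (cls_eq_of_r (hres _ _ hab))
  · exact (qLE_mid hres (τ.iseqv.symm hab)).symm
  · exact qLE_mid hres hab
  · exact qLE_mid_congr hres hab

theorem qLE_top (hres : ∀ i j, τ.r (Sum.inl i) (Sum.inl j) → ρ.r (Sum.inl i) (Sum.inl j)) :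
    ∀ a b, (sigLE n τ ρ).r a b → qLE τ ρ (embTop n a) = qLE τ ρ (embTop n b) := by
  intro a b h
  refine eqvGen_map_imp ⟨fun _ => rfl, Eq.symm, Eq.trans⟩ (fun d => qLE τ ρ (embTop n d)) ?_
    (h : EqvGen (legen τ ρ) a b)
  rintro u v (⟨i, j, hij, rfl, rfl⟩ | ⟨i, j, hij, rfl, rfl⟩ | ⟨i, j, k, hk1, hk2, rfl, rfl⟩)
  · exact qLE_mid_congr hres hij
  · show qLE τ ρ (embTop n (Sum.inr i)) = qLE τ ρ (embTop n (Sum.inr j))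
    rw [embTop_inr, embTop_inr, qLE_inr_inr, qLE_inr_inr]
    exact congrArg Sum.inl (cls_eq_of_r hij)
  · show qLE τ ρ (embTop n (Sum.inl i)) = qLE τ ρ (embTop n (Sum.inr j))
    rw [embTop_inl, embTop_inr, qLE_mid hres hk1, qLE_inr_inr]
    exact congrArg Sum.inl (cls_eq_of_r hk2)

theorem pcomp_sigLE
    (hres : ∀ i j, τ.r (Sum.inl i) (Sum.inl j) ↔ ρ.r (Sum.inl i) (Sum.inl j))
    (hprop : ∀ i, (∃ k, ρ.r (Sum.inl i) (Sum.inr k)) → ∃ k, τ.r (Sum.inl i) (Sum.inr k)) :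
    pcomp n (sigLE n τ ρ) τ = ρ := by
  have hres1 : ∀ i j, τ.r (Sum.inl i) (Sum.inl j) → ρ.r (Sum.inl i) (Sum.inl j) :=
    fun i j => (hres i j).mp
  apply Setoid.ext
  intro x y
  rw [pcomp_r]
  constructor
  · intro h
    have key : qLE τ ρ (embOut n x) = qLE τ ρ (embOut n y) :=
      glue_ind (qLE τ ρ) (qLE_bot hres1) (qLE_top hres1) h
    have ev : ∀ z : DVert n, qLE τ ρ (embOut n z) = Sum.inl (cls ρ z) := by
      rintro (i | i) <;> rfl
    rw [ev x, ev y] at key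
    exact cls_eq_iff.mp (Sum.inl_injective key)
  · intro h
    have aux : ∀ i j, ρ.r (Sum.inl i) (Sum.inr j) →
        (glue n (sigLE n τ ρ) τ).r (embOut n (Sum.inl i)) (embOut n (Sum.inr j)) := by
      intro i j hij
      obtain ⟨k, hk⟩ := hprop i ⟨j, hij⟩
      have g1 : (glue n (sigLE n τ ρ) τ).r (embBot n (Sum.inl i)) (embBot n (Sum.inr k)) :=
        glue_bot hk
      have hs : (sigLE n τ ρ).r (Sum.inl k) (Sum.inr j) :=
        EqvGen.rel _ _ (Or.inr (Or.inr ⟨k, j, i, τ.iseqv.symm hk, hij, rfl, rfl⟩))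
      exact (glue n (sigLE n τ ρ) τ).iseqv.trans g1 (glue_top hs)
    cases x with
    | inl i =>
      cases y with
      | inl j => exact glue_bot ((hres i j).mpr h)
      | inr j => exact aux i j h
    | inr i =>
      cases y with
      | inl j => exact (glue n (sigLE n τ ρ) τ).iseqv.symm (aux j i (ρ.iseqv.symm h))
      | inr j =>
        have hs : (sigLE n τ ρ).r (Sum.inr i) (Sum.inr j) :=
          EqvGen.rel _ _ (Or.inr (Or.inl ⟨i, j, h, rfl, rfl⟩))
        exact glue_top hs

end LIpart3

section LIpart4
variable {n : ℕ}

abbrev QVert (n : ℕ) := Fin n ⊕ (Fin n ⊕ (Fin n ⊕ Fin n))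

def e01 (n : ℕ) : DVert n → QVert n :=
  Sum.elim Sum.inl (fun i => Sum.inr (Sum.inl i))
def e12 (n : ℕ) : DVert n → QVert n :=
  Sum.elim (fun i => Sum.inr (Sum.inl i)) (fun i => Sum.inr (Sum.inr (Sum.inl i)))
def e23 (n : ℕ) : DVert n → QVert n :=
  Sum.elim (fun i => Sum.inr (Sum.inr (Sum.inl i))) (fun i => Sum.inr (Sum.inr (Sum.inr i)))
def e03 (n : ℕ) : DVert n → QVert n :=
  Sum.elim Sum.inl (fun i => Sum.inr (Sum.inr (Sum.inr i)))

def bgen (μ σ τ : Setoid (DVert n)) : QVert n → QVert n → Prop := fun z w =>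
  (∃ a b, τ.r a b ∧ z = e01 n a ∧ w = e01 n b) ∨
  (∃ a b, σ.r a b ∧ z = e12 n a ∧ w = e12 n b) ∨
  (∃ a b, μ.r a b ∧ z = e23 n a ∧ w = e23 n b)

def m1 (n : ℕ) : TVert n → QVert n :=
  Sum.elim Sum.inl (Sum.elim (fun i => Sum.inr (Sum.inr (Sum.inl i)))
    (fun i => Sum.inr (Sum.inr (Sum.inr i))))
def m2 (n : ℕ) : TVert n → QVert n :=
  Sum.elim Sum.inl (Sum.elim (fun i => Sum.inr (Sum.inl i))
    (fun i => Sum.inr (Sum.inr (Sum.inl i))))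
def m1' (n : ℕ) : TVert n → QVert n :=
  Sum.elim Sum.inl (Sum.elim (fun i => Sum.inr (Sum.inl i))
    (fun i => Sum.inr (Sum.inr (Sum.inr i))))
def m2' (n : ℕ) : TVert n → QVert n :=
  Sum.elim (fun i => Sum.inr (Sum.inl i)) (Sum.elim (fun i => Sum.inr (Sum.inr (Sum.inl i)))
    (fun i => Sum.inr (Sum.inr (Sum.inr i))))

variable {μ σ τ : Setoid (DVert n)}

private theorem bEquiv : Equivalence (EqvGen (bgen μ σ τ)) :=
  ⟨fun x => EqvGen.refl x, fun h => EqvGen.symm _ _ h, fun h1 h2 => EqvGen.trans _ _ _ h1 h2⟩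

theorem g_to_B : ∀ {u v}, (glue n σ τ).r u v →
    EqvGen (bgen μ σ τ) (m2 n u) (m2 n v) := by
  intro u v h
  refine glue_map bEquiv (m2 n) ?_ ?_ h
  · intro a b hab
    exact EqvGen.rel _ _ (Or.inl ⟨a, b, hab, by cases a <;> rfl, by cases b <;> rfl⟩)
  · intro a b hab
    exact EqvGen.rel _ _ (Or.inr (Or.inl ⟨a, b, hab, by cases a <;> rfl, by cases b <;> rfl⟩))

theorem L1fwd {x y : DVert n} (h : (pcomp n μ (pcomp n σ τ)).r x y) :
    EqvGen (bgen μ σ τ) (e03 n x) (e03 n y) := by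
  have key : EqvGen (bgen μ σ τ) (m1 n (embOut n x)) (m1 n (embOut n y)) := by
    refine glue_map bEquiv (m1 n) ?_ ?_ h
    · intro a b hab
      have h2 : EqvGen (bgen μ σ τ) (m2 n (embOut n a)) (m2 n (embOut n b)) := g_to_B hab
      have ea : ∀ c : DVert n, m1 n (embBot n c) = m2 n (embOut n c) := by rintro (i | i) <;> rfl
      rw [ea, ea]; exact h2
    · intro a b hab
      exact EqvGen.rel _ _ (Or.inr (Or.inr ⟨a, b, hab, by cases a <;> rfl, by cases b <;> rfl⟩))
  have ez : ∀ c : DVert n, m1 n (embOut n c) = e03 n c := by rintro (i | i) <;> rfl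
  rw [ez, ez] at key; exact key

theorem R1fwd {x y : DVert n} (h : (pcomp n (pcomp n μ σ) τ).r x y) :
    EqvGen (bgen μ σ τ) (e03 n x) (e03 n y) := by
  have inner : ∀ {u v}, (glue n μ σ).r u v →
      EqvGen (bgen μ σ τ) (m2' n u) (m2' n v) := by
    intro u v huv
    refine glue_map bEquiv (m2' n) ?_ ?_ huv
    · intro a b hab
      exact EqvGen.rel _ _ (Or.inr (Or.inl ⟨a, b, hab, by cases a <;> rfl, by cases b <;> rfl⟩))
    · intro a b hab
      exact EqvGen.rel _ _ (Or.inr (Or.inr ⟨a, b, hab, by cases a <;> rfl, by cases b <;> rfl⟩))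
  have key : EqvGen (bgen μ σ τ) (m1' n (embOut n x)) (m1' n (embOut n y)) := by
    refine glue_map bEquiv (m1' n) ?_ ?_ h
    · intro a b hab
      exact EqvGen.rel _ _ (Or.inl ⟨a, b, hab, by cases a <;> rfl, by cases b <;> rfl⟩)
    · intro a b hab
      have h2 : EqvGen (bgen μ σ τ) (m2' n (embOut n a)) (m2' n (embOut n b)) := inner hab
      have ea : ∀ c : DVert n, m1' n (embTop n c) = m2' n (embOut n c) := by rintro (i | i) <;> rfl
      rw [ea, ea]; exact h2
  have ez : ∀ c : DVert n, m1' n (embOut n c) = e03 n c := by rintro (i | i) <;> rfl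
  rw [ez, ez] at key; exact key

end LIpart4

section LIpart5
variable {n : ℕ} {μ σ τ : Setoid (DVert n)}

def qA (μ σ τ : Setoid (DVert n)) : QVert n → Set (TVert n) ⊕ Set (TVert n)
  | Sum.inl i => Sum.inl (cls (glue n μ (pcomp n σ τ)) (Sum.inl i))
  | Sum.inr (Sum.inl i) =>
      if h : ∃ d : DVert n, (glue n σ τ).r (Sum.inr (Sum.inl i)) (embOut n d)
      then Sum.inl (cls (glue n μ (pcomp n σ τ)) (embBot n h.choose))
      else Sum.inr (cls (glue n σ τ) (Sum.inr (Sum.inl i)))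
  | Sum.inr (Sum.inr (Sum.inl i)) =>
      Sum.inl (cls (glue n μ (pcomp n σ τ)) (Sum.inr (Sum.inl i)))
  | Sum.inr (Sum.inr (Sum.inr i)) =>
      Sum.inl (cls (glue n μ (pcomp n σ τ)) (Sum.inr (Sum.inr i)))

@[simp] theorem qA_r0 {i : Fin n} :
    qA μ σ τ (Sum.inl i) = Sum.inl (cls (glue n μ (pcomp n σ τ)) (Sum.inl i)) := rfl
@[simp] theorem qA_r2 {i : Fin n} : qA μ σ τ (Sum.inr (Sum.inr (Sum.inl i))) =
    Sum.inl (cls (glue n μ (pcomp n σ τ)) (Sum.inr (Sum.inl i))) := rfl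
@[simp] theorem qA_r3 {i : Fin n} : qA μ σ τ (Sum.inr (Sum.inr (Sum.inr i))) =
    Sum.inl (cls (glue n μ (pcomp n σ τ)) (Sum.inr (Sum.inr i))) := rfl

theorem qA_mid {i : Fin n} {d : DVert n}
    (h : (glue n σ τ).r (Sum.inr (Sum.inl i)) (embOut n d)) :
    qA μ σ τ (Sum.inr (Sum.inl i)) =
      Sum.inl (cls (glue n μ (pcomp n σ τ)) (embBot n d)) := by
  have hx : ∃ d : DVert n, (glue n σ τ).r (Sum.inr (Sum.inl i)) (embOut n d) := ⟨d, h⟩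
  show (if h : ∃ d : DVert n, (glue n σ τ).r (Sum.inr (Sum.inl i)) (embOut n d)
      then Sum.inl (cls (glue n μ (pcomp n σ τ)) (embBot n h.choose))
      else Sum.inr (cls (glue n σ τ) (Sum.inr (Sum.inl i)))) = _
  rw [dif_pos hx]
  congr 1
  have hdd : (pcomp n σ τ).r hx.choose d :=
    (glue n σ τ).iseqv.trans ((glue n σ τ).iseqv.symm hx.choose_spec) h
  exact cls_eq_of_r (glue_bot hdd)

theorem qA_mid_none {i : Fin n}
    (h : ¬ ∃ d : DVert n, (glue n σ τ).r (Sum.inr (Sum.inl i)) (embOut n d)) :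
    qA μ σ τ (Sum.inr (Sum.inl i)) = Sum.inr (cls (glue n σ τ) (Sum.inr (Sum.inl i))) := by
  show (if h : ∃ d : DVert n, (glue n σ τ).r (Sum.inr (Sum.inl i)) (embOut n d)
      then Sum.inl (cls (glue n μ (pcomp n σ τ)) (embBot n h.choose))
      else Sum.inr (cls (glue n σ τ) (Sum.inr (Sum.inl i)))) = _
  rw [dif_neg h]

theorem qA_mid_congr {i j : Fin n}
    (h : (glue n σ τ).r (Sum.inr (Sum.inl i)) (Sum.inr (Sum.inl j))) :
    qA μ σ τ (Sum.inr (Sum.inl i)) = qA μ σ τ (Sum.inr (Sum.inl j)) := by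
  by_cases hi : ∃ d : DVert n, (glue n σ τ).r (Sum.inr (Sum.inl i)) (embOut n d)
  · obtain ⟨d, hd⟩ := hi
    rw [qA_mid hd, qA_mid ((glue n σ τ).iseqv.trans ((glue n σ τ).iseqv.symm h) hd)]
  · have hj : ¬ ∃ d : DVert n, (glue n σ τ).r (Sum.inr (Sum.inl j)) (embOut n d) := by
      rintro ⟨d, hd⟩; exact hi ⟨d, (glue n σ τ).iseqv.trans h hd⟩
    rw [qA_mid_none hi, qA_mid_none hj]
    exact congrArg Sum.inr (cls_eq_of_r h)

theorem qA_gen : ∀ z w, bgen μ σ τ z w → qA μ σ τ z = qA μ σ τ w := by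
  rintro _ _ (⟨a, b, hab, rfl, rfl⟩ | ⟨a, b, hab, rfl, rfl⟩ | ⟨a, b, hab, rfl, rfl⟩)
  · -- τ-pair on rows 0/1
    cases a with
    | inl i =>
      cases b with
      | inl j =>
        have h1 : (pcomp n σ τ).r (Sum.inl i) (Sum.inl j) := glue_bot hab
        exact congrArg Sum.inl (cls_eq_of_r (glue_bot (ρ := pcomp n σ τ) h1))
      | inr j =>
        have h1 : (glue n σ τ).r (Sum.inr (Sum.inl j)) (embOut n (Sum.inl i)) :=
          glue_bot (τ.iseqv.symm hab)
        exact (qA_mid h1).symm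
    | inr i =>
      cases b with
      | inl j =>
        have h1 : (glue n σ τ).r (Sum.inr (Sum.inl i)) (embOut n (Sum.inl j)) := glue_bot hab
        exact qA_mid h1
      | inr j =>
        exact qA_mid_congr (glue_bot hab)
  · -- σ-pair on rows 1/2
    cases a with
    | inl i =>
      cases b with
      | inl j => exact qA_mid_congr (glue_top hab)
      | inr j =>
        have h1 : (glue n σ τ).r (Sum.inr (Sum.inl i)) (embOut n (Sum.inr j)) := glue_top hab
        exact qA_mid h1
    | inr i =>
      cases b with
      | inl j =>
        have h1 : (glue n σ τ).r (Sum.inr (Sum.inl j)) (embOut n (Sum.inr i)) :=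
          glue_top (σ.iseqv.symm hab)
        exact (qA_mid h1).symm
      | inr j =>
        have h1 : (pcomp n σ τ).r (Sum.inr i) (Sum.inr j) := glue_top hab
        exact congrArg Sum.inl (cls_eq_of_r (glue_bot (ρ := pcomp n σ τ) h1))
  · -- μ-pair on rows 2/3
    cases a <;> cases b <;>
      exact congrArg Sum.inl (cls_eq_of_r (glue_top (ρ := pcomp n σ τ) hab))

theorem L1bwd {x y : DVert n} (h : EqvGen (bgen μ σ τ) (e03 n x) (e03 n y)) :
    (pcomp n μ (pcomp n σ τ)).r x y := by
  have key : qA μ σ τ (e03 n x) = qA μ σ τ (e03 n y) :=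
    eqvGen_map_imp ⟨fun _ => rfl, Eq.symm, Eq.trans⟩ (qA μ σ τ) qA_gen h
  have ev : ∀ z : DVert n, qA μ σ τ (e03 n z) =
      Sum.inl (cls (glue n μ (pcomp n σ τ)) (embOut n z)) := by rintro (i | i) <;> rfl
  rw [ev, ev] at key
  have key2 : cls (glue n μ (pcomp n σ τ)) (embOut n x) =
      cls (glue n μ (pcomp n σ τ)) (embOut n y) := Sum.inl_injective key
  exact pcomp_r.mpr (cls_eq_iff.mp key2)

end LIpart5

section LIpart6
variable {n : ℕ} {μ σ τ : Setoid (DVert n)}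

def qA' (μ σ τ : Setoid (DVert n)) : QVert n → Set (TVert n) ⊕ Set (TVert n)
  | Sum.inl i => Sum.inl (cls (glue n (pcomp n μ σ) τ) (Sum.inl i))
  | Sum.inr (Sum.inl i) => Sum.inl (cls (glue n (pcomp n μ σ) τ) (Sum.inr (Sum.inl i)))
  | Sum.inr (Sum.inr (Sum.inl i)) =>
      if h : ∃ d : DVert n, (glue n μ σ).r (Sum.inr (Sum.inl i)) (embOut n d)
      then Sum.inl (cls (glue n (pcomp n μ σ) τ) (embTop n h.choose))
      else Sum.inr (cls (glue n μ σ) (Sum.inr (Sum.inl i)))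
  | Sum.inr (Sum.inr (Sum.inr i)) =>
      Sum.inl (cls (glue n (pcomp n μ σ) τ) (Sum.inr (Sum.inr i)))

theorem qA'_mid {i : Fin n} {d : DVert n}
    (h : (glue n μ σ).r (Sum.inr (Sum.inl i)) (embOut n d)) :
    qA' μ σ τ (Sum.inr (Sum.inr (Sum.inl i))) =
      Sum.inl (cls (glue n (pcomp n μ σ) τ) (embTop n d)) := by
  have hx : ∃ d : DVert n, (glue n μ σ).r (Sum.inr (Sum.inl i)) (embOut n d) := ⟨d, h⟩
  show (if h : ∃ d : DVert n, (glue n μ σ).r (Sum.inr (Sum.inl i)) (embOut n d)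
      then Sum.inl (cls (glue n (pcomp n μ σ) τ) (embTop n h.choose))
      else Sum.inr (cls (glue n μ σ) (Sum.inr (Sum.inl i)))) = _
  rw [dif_pos hx]
  congr 1
  have hdd : (pcomp n μ σ).r hx.choose d :=
    (glue n μ σ).iseqv.trans ((glue n μ σ).iseqv.symm hx.choose_spec) h
  exact cls_eq_of_r (glue_top hdd)

theorem qA'_mid_none {i : Fin n}
    (h : ¬ ∃ d : DVert n, (glue n μ σ).r (Sum.inr (Sum.inl i)) (embOut n d)) :
    qA' μ σ τ (Sum.inr (Sum.inr (Sum.inl i))) =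
      Sum.inr (cls (glue n μ σ) (Sum.inr (Sum.inl i))) := by
  show (if h : ∃ d : DVert n, (glue n μ σ).r (Sum.inr (Sum.inl i)) (embOut n d)
      then Sum.inl (cls (glue n (pcomp n μ σ) τ) (embTop n h.choose))
      else Sum.inr (cls (glue n μ σ) (Sum.inr (Sum.inl i)))) = _
  rw [dif_neg h]

theorem qA'_mid_congr {i j : Fin n}
    (h : (glue n μ σ).r (Sum.inr (Sum.inl i)) (Sum.inr (Sum.inl j))) :
    qA' μ σ τ (Sum.inr (Sum.inr (Sum.inl i))) = qA' μ σ τ (Sum.inr (Sum.inr (Sum.inl j))) := by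
  by_cases hi : ∃ d : DVert n, (glue n μ σ).r (Sum.inr (Sum.inl i)) (embOut n d)
  · obtain ⟨d, hd⟩ := hi
    rw [qA'_mid hd, qA'_mid ((glue n μ σ).iseqv.trans ((glue n μ σ).iseqv.symm h) hd)]
  · have hj : ¬ ∃ d : DVert n, (glue n μ σ).r (Sum.inr (Sum.inl j)) (embOut n d) := by
      rintro ⟨d, hd⟩; exact hi ⟨d, (glue n μ σ).iseqv.trans h hd⟩
    rw [qA'_mid_none hi, qA'_mid_none hj]
    exact congrArg Sum.inr (cls_eq_of_r h)

theorem qA'_gen : ∀ z w, bgen μ σ τ z w → qA' μ σ τ z = qA' μ σ τ w := by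
  rintro _ _ (⟨a, b, hab, rfl, rfl⟩ | ⟨a, b, hab, rfl, rfl⟩ | ⟨a, b, hab, rfl, rfl⟩)
  · -- τ-pair on rows 0/1
    cases a <;> cases b <;>
      exact congrArg Sum.inl (cls_eq_of_r (glue_bot (τ := pcomp n μ σ) hab))
  · -- σ-pair on rows 1/2
    cases a with
    | inl i =>
      cases b with
      | inl j =>
        have h1 : (pcomp n μ σ).r (Sum.inl i) (Sum.inl j) := glue_bot hab
        exact congrArg Sum.inl (cls_eq_of_r (glue_top (τ := pcomp n μ σ) h1))
      | inr j =>
        have h1 : (glue n μ σ).r (Sum.inr (Sum.inl j)) (embOut n (Sum.inl i)) :=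
          glue_bot (σ.iseqv.symm hab)
        exact (qA'_mid h1).symm
    | inr i =>
      cases b with
      | inl j =>
        have h1 : (glue n μ σ).r (Sum.inr (Sum.inl i)) (embOut n (Sum.inl j)) := glue_bot hab
        exact qA'_mid h1
      | inr j => exact qA'_mid_congr (glue_bot hab)
  · -- μ-pair on rows 2/3
    cases a with
    | inl i =>
      cases b with
      | inl j => exact qA'_mid_congr (glue_top hab)
      | inr j =>
        have h1 : (glue n μ σ).r (Sum.inr (Sum.inl i)) (embOut n (Sum.inr j)) := glue_top hab
        exact qA'_mid h1
    | inr i =>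
      cases b with
      | inl j =>
        have h1 : (glue n μ σ).r (Sum.inr (Sum.inl j)) (embOut n (Sum.inr i)) :=
          glue_top (μ.iseqv.symm hab)
        exact (qA'_mid h1).symm
      | inr j =>
        have h1 : (pcomp n μ σ).r (Sum.inr i) (Sum.inr j) := glue_top hab
        exact congrArg Sum.inl (cls_eq_of_r (glue_top (τ := pcomp n μ σ) h1))

theorem R1bwd {x y : DVert n} (h : EqvGen (bgen μ σ τ) (e03 n x) (e03 n y)) :
    (pcomp n (pcomp n μ σ) τ).r x y := by
  have key : qA' μ σ τ (e03 n x) = qA' μ σ τ (e03 n y) :=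
    eqvGen_map_imp ⟨fun _ => rfl, Eq.symm, Eq.trans⟩ (qA' μ σ τ) qA'_gen h
  have ev : ∀ z : DVert n, qA' μ σ τ (e03 n z) =
      Sum.inl (cls (glue n (pcomp n μ σ) τ) (embOut n z)) := by rintro (i | i) <;> rfl
  rw [ev, ev] at key
  have key2 : cls (glue n (pcomp n μ σ) τ) (embOut n x) =
      cls (glue n (pcomp n μ σ) τ) (embOut n y) := Sum.inl_injective key
  exact pcomp_r.mpr (cls_eq_iff.mp key2)

/-- Associativity of composition in the partition monoid. -/
theorem passoc (μ σ τ : Setoid (DVert n)) :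
    pcomp n μ (pcomp n σ τ) = pcomp n (pcomp n μ σ) τ := by
  apply Setoid.ext
  intro x y
  exact ⟨fun h => R1bwd (L1fwd h), fun h => L1bwd (R1fwd h)⟩

end LIpart6

section LIpart7
variable {n : ℕ}

/-- The set of diagrams of the form `ν ∘ τ`. -/
def SDer (n : ℕ) (τ : Setoid (DVert n)) : Set (Setoid (DVert n)) :=
  {m | ∃ ν, m = pcomp n ν τ}

theorem pmul_single_single (δ : ℂ) (ν τ : Setoid (DVert n)) (c b : ℂ) :
    pmul n δ (Finsupp.single ν c) (Finsupp.single τ b) =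
      Finsupp.single (pcomp n ν τ) (δ ^ ccount n ν τ * (c * b)) := by
  unfold pmul
  rw [Finsupp.sum_single_index, Finsupp.sum_single_index]
  · simp
  · rw [Finsupp.sum_single_index] <;> simp

theorem pmul_x_single (δ : ℂ) (x : Setoid (DVert n) →₀ ℂ) (τ : Setoid (DVert n)) :
    pmul n δ x (Finsupp.single τ 1) =
      x.sum fun ν a => Finsupp.single (pcomp n ν τ) (δ ^ ccount n ν τ * a) := by
  unfold pmul
  refine Finsupp.sum_congr fun ν _ => ?_
  rw [Finsupp.sum_single_index] <;> simp

theorem span_eq_supported (δ : ℂ) (hδ : δ ≠ 0) (τ : Setoid (DVert n)) :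
    Submodule.span ℂ (Set.range fun x => pmul n δ x (Finsupp.single τ 1)) =
      Finsupp.supported ℂ ℂ (SDer n τ) := by
  apply le_antisymm
  · rw [Submodule.span_le]
    rintro _ ⟨x, rfl⟩
    simp only [SetLike.mem_coe]
    rw [pmul_x_single]
    exact Submodule.sum_mem _ fun ν _ =>
      Finsupp.single_mem_supported ℂ _ ⟨ν, rfl⟩
  · rw [Finsupp.supported_eq_span_single, Submodule.span_le]
    rintro _ ⟨m, ⟨ν, rfl⟩, rfl⟩
    apply Submodule.subset_span
    refine ⟨Finsupp.single ν (δ ^ ccount n ν τ)⁻¹, ?_⟩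
    show pmul n δ (Finsupp.single ν (δ ^ ccount n ν τ)⁻¹) (Finsupp.single τ 1) =
      Finsupp.single (pcomp n ν τ) 1
    rw [pmul_single_single, mul_one, mul_inv_cancel₀ (pow_ne_zero _ hδ)]

theorem mem_of_single_mem {S : Set (Setoid (DVert n))} {ρ : Setoid (DVert n)}
    (h : Finsupp.single ρ (1 : ℂ) ∈ Finsupp.supported ℂ ℂ S) : ρ ∈ S := by
  rw [Finsupp.mem_supported] at h
  exact h (Finsupp.mem_support_iff.mpr (by simp))

end LIpart7

/-- two diagrams are left equivalent (same restriction to `n̄` and the same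
right parts, i.e. parts contained in `n̄`) if and only if they generate the same left ideal
of the partition algebra `𝐏ₙ(δ)`, `δ ≠ 0`. -/
theorem left_equiv_iff_left_ideal (n : ℕ) (δ : ℂ) (hδ : δ ≠ 0) (τ ρ : Setoid (DVert n)) :
    ((∀ i j : Fin n, τ.r (Sum.inl i) (Sum.inl j) ↔ ρ.r (Sum.inl i) (Sum.inl j)) ∧
      {C | C ∈ τ.classes ∧ C ⊆ Set.range Sum.inl} =
        {C | C ∈ ρ.classes ∧ C ⊆ Set.range Sum.inl}) ↔
    Submodule.span ℂ (Set.range fun x => pmul n δ x (Finsupp.single τ 1)) =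
      Submodule.span ℂ (Set.range fun x => pmul n δ x (Finsupp.single ρ 1)) := by
  constructor
  · rintro ⟨hres, hcls⟩
    have hprop1 : ∀ i, (∃ k, ρ.r (Sum.inl i) (Sum.inr k)) →
        ∃ k, τ.r (Sum.inl i) (Sum.inr k) := fun i h => prop_transfer hcls.subset h
    have hprop2 : ∀ i, (∃ k, τ.r (Sum.inl i) (Sum.inr k)) →
        ∃ k, ρ.r (Sum.inl i) (Sum.inr k) := fun i h => prop_transfer hcls.symm.subset h
    have h1 : pcomp n (sigLE n τ ρ) τ = ρ := pcomp_sigLE hres hprop1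
    have h2 : pcomp n (sigLE n ρ τ) ρ = τ :=
      pcomp_sigLE (fun i j => (hres i j).symm) hprop2
    have hS : SDer n τ = SDer n ρ := by
      ext m
      constructor
      · rintro ⟨ν, rfl⟩
        exact ⟨pcomp n ν (sigLE n ρ τ), by rw [← passoc, h2]⟩
      · rintro ⟨ν, rfl⟩
        exact ⟨pcomp n ν (sigLE n τ ρ), by rw [← passoc, h1]⟩
    rw [span_eq_supported δ hδ τ, span_eq_supported δ hδ ρ, hS]
  · intro hspan
    have self_mem : ∀ μ : Setoid (DVert n), μ ∈ SDer n μ :=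
      fun μ => ⟨pid n, (pcomp_pid μ).symm⟩
    have hmemρ : ρ ∈ SDer n τ := by
      have h : Finsupp.single ρ (1 : ℂ) ∈ Finsupp.supported ℂ ℂ (SDer n ρ) :=
        Finsupp.single_mem_supported ℂ 1 (self_mem ρ)
      rw [← span_eq_supported δ hδ ρ, ← hspan, span_eq_supported δ hδ τ] at h
      exact mem_of_single_mem h
    have hmemτ : τ ∈ SDer n ρ := by
      have h : Finsupp.single τ (1 : ℂ) ∈ Finsupp.supported ℂ ℂ (SDer n τ) :=
        Finsupp.single_mem_supported ℂ 1 (self_mem τ)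
      rw [← span_eq_supported δ hδ τ, hspan, span_eq_supported δ hδ ρ] at h
      exact mem_of_single_mem h
    obtain ⟨s1, hs1⟩ := hmemρ
    obtain ⟨s2, hs2⟩ := hmemτ
    constructor
    · intro i j
      constructor
      · intro h; rw [hs1]; exact pcomp_restrict h
      · intro h; rw [hs2]; exact pcomp_restrict h
    · ext C
      simp only [Set.mem_setOf_eq]
      constructor
      · rintro ⟨hC, hsub⟩
        exact ⟨by rw [hs1]; exact pcomp_right_part hC hsub, hsub⟩
      · rintro ⟨hC, hsub⟩
        exact ⟨by rw [hs2]; exact pcomp_right_part hC hsub, hsub⟩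

end
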